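/- Let (Ω, 𝓕, P) be a probability space with a filtration (𝓕_t)_{t∈ℕ}, and let (u_t)_{t∈ℕ} be a sequence of nonnegative, integrable real random variables adapted to (𝓕_t). For each t define δ_t : Ω → {0, 1} by δ_t = 1 on the event {E[u_{t+1} − u_t | 𝓕_t] > 0} and δ_t = 0 otherwise. If Σ_{t=1}^∞ E[δ_t·(u_{t+1} − u_t)] < ∞, then (u_t) converges almost surely, and moreover Σ_{t=1}^∞ |E[u_{t+1} − u_t | 𝓕_t]| < ∞ almost surely. -/

import Mathlib

open MeasureTheory Filter

/-- Quasi-martingale convergence: if `(u_t)` is a nonnegative integrable adapted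
process and `Σ_t E[δ_t (u_{t+1} − u_t)] < ∞`, where `δ_t` is the indicator of the
event `{E[u_{t+1} − u_t | 𝓕_t] > 0}`, then `u_t` converges almost surely and
`Σ_t |E[u_{t+1} − u_t | 𝓕_t]| < ∞` almost surely. -/
theorem stmt_14 {Ω : Type*} {m0 : MeasurableSpace Ω} (μ : Measure Ω)
    [IsProbabilityMeasure μ] (ℱ : Filtration ℕ m0) (u : ℕ → Ω → ℝ)
    (hadapt : Adapted ℱ u)
    (hnonneg : ∀ t ω, 0 ≤ u t ω)
    (hint : ∀ t, Integrable (u t) μ)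
    (hsum : Summable fun t =>
      ∫ ω, Set.indicator {ω' | 0 < (μ[u (t + 1) - u t | ℱ t]) ω'}
        (fun ω' => u (t + 1) ω' - u t ω') ω ∂μ) :
    ∀ᵐ ω ∂μ,
      (∃ l : ℝ, Tendsto (fun t => u t ω) atTop (nhds l)) ∧
      Summable (fun t => |(μ[u (t + 1) - u t | ℱ t]) ω|) := by
  classical
  set g : ℕ → Ω → ℝ := fun t => μ[u (t + 1) - u t | ℱ t] with hgdef
  have hgint : ∀ t, Integrable (g t) μ := fun t => integrable_condExp
  have hgmeas : ∀ t, StronglyMeasurable[ℱ t] (g t) := fun t => stronglyMeasurable_condExp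
  set p : ℕ → Ω → ℝ := fun t ω => max (g t ω) 0 with hpdef
  set q : ℕ → Ω → ℝ := fun t ω => max (-(g t ω)) 0 with hqdef
  have hpnn : ∀ t ω, 0 ≤ p t ω := fun t ω => le_max_right _ _
  have hqnn : ∀ t ω, 0 ≤ q t ω := fun t ω => le_max_right _ _
  have hpqg : ∀ t ω, p t ω - q t ω = g t ω := by
    intro t ω
    simp only [hpdef, hqdef]
    rcases le_total (g t ω) 0 with h | h
    · rw [max_eq_right h, max_eq_left (by linarith)]; ring
    · rw [max_eq_left h, max_eq_right (by linarith)]; ring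
  have habs : ∀ t ω, |g t ω| = p t ω + q t ω := by
    intro t ω
    simp only [hpdef, hqdef]
    rcases le_total (g t ω) 0 with h | h
    · rw [abs_of_nonpos h, max_eq_right h, max_eq_left (by linarith)]; ring
    · rw [abs_of_nonneg h, max_eq_left h, max_eq_right (by linarith)]; ring
  have hpint : ∀ t, Integrable (p t) μ := fun t => (hgint t).pos_part
  have hqint : ∀ t, Integrable (q t) μ := fun t => (hgint t).neg_part
  have hpmeas : ∀ t, StronglyMeasurable[ℱ t] (p t) := fun t =>
    ((hgmeas t).measurable.max measurable_const).stronglyMeasurable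
  have hqmeas : ∀ t, StronglyMeasurable[ℱ t] (q t) := fun t =>
    ((hgmeas t).measurable.neg.max measurable_const).stronglyMeasurable
  have hpm0 : ∀ t, Measurable (p t) := fun t => ((hpmeas t).mono (ℱ.le t)).measurable
  -- Step 1: the summability assumption gives summability of `∫ p t`.
  have hsum' : Summable fun t => ∫ ω, p t ω ∂μ := by
    refine hsum.congr fun t => ?_
    have hA : MeasurableSet[ℱ t] {ω' | 0 < g t ω'} :=
      measurableSet_lt measurable_const (hgmeas t).measurable
    have hsub : Integrable (u (t + 1) - u t) μ := (hint (t + 1)).sub (hint t)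
    have h1 : ∫ ω in {ω' | 0 < g t ω'}, g t ω ∂μ
        = ∫ ω in {ω' | 0 < g t ω'}, (u (t + 1) ω - u t ω) ∂μ := by
      have := setIntegral_condExp (ℱ.le t) hsub hA
      simpa only [Pi.sub_apply] using this
    have h2 : ∫ ω, Set.indicator {ω' | 0 < g t ω'} (g t) ω ∂μ = ∫ ω, p t ω ∂μ := by
      congr 1
      funext ω
      by_cases h : 0 < g t ω
      · rw [Set.indicator_of_mem (show ω ∈ {ω' | 0 < g t ω'} from h) (g t)]
        simp only [hpdef]
        rw [max_eq_left h.le]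
      · rw [Set.indicator_of_notMem (show ω ∉ {ω' | 0 < g t ω'} from h) (g t)]
        simp only [hpdef]
        rw [max_eq_right (le_of_not_gt h)]
    calc ∫ ω, Set.indicator {ω' | 0 < g t ω'} (fun ω' => u (t + 1) ω' - u t ω') ω ∂μ
        = ∫ ω in {ω' | 0 < g t ω'}, (u (t + 1) ω - u t ω) ∂μ :=
          integral_indicator (ℱ.le t _ hA)
      _ = ∫ ω in {ω' | 0 < g t ω'}, g t ω ∂μ := h1.symm
      _ = ∫ ω, Set.indicator {ω' | 0 < g t ω'} (g t) ω ∂μ :=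
          (integral_indicator (ℱ.le t _ hA)).symm
      _ = ∫ ω, p t ω ∂μ := h2
  -- The total positive drift `S`.
  set G : Ω → ENNReal := fun ω => ∑' t, ENNReal.ofReal (p t ω) with hGdef
  have hGmeas : Measurable G := Measurable.ennreal_tsum fun t => (hpm0 t).ennreal_ofReal
  have hGlint : ∫⁻ ω, G ω ∂μ = ENNReal.ofReal (∑' t, ∫ ω, p t ω ∂μ) := by
    calc ∫⁻ ω, G ω ∂μ = ∑' t, ∫⁻ ω, ENNReal.ofReal (p t ω) ∂μ :=
          lintegral_tsum fun t => ((hpm0 t).ennreal_ofReal).aemeasurable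
      _ = ∑' t, ENNReal.ofReal (∫ ω, p t ω ∂μ) :=
          tsum_congr fun t =>
            (ofReal_integral_eq_lintegral_ofReal (hpint t) (ae_of_all μ (hpnn t))).symm
      _ = ENNReal.ofReal (∑' t, ∫ ω, p t ω ∂μ) :=
          (ENNReal.ofReal_tsum_of_nonneg (fun t => integral_nonneg (hpnn t)) hsum').symm
  have hGfin : ∀ᵐ ω ∂μ, G ω < ⊤ :=
    ae_lt_top hGmeas (by rw [hGlint]; exact ENNReal.ofReal_ne_top)
  set S : Ω → ℝ := fun ω => (G ω).toReal with hSdef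
  have hSmeas : Measurable S := hGmeas.ennreal_toReal
  have hSnn : ∀ ω, 0 ≤ S ω := fun ω => ENNReal.toReal_nonneg
  have hSint : Integrable S μ := by
    refine ⟨hSmeas.stronglyMeasurable.aestronglyMeasurable, ?_⟩
    rw [hasFiniteIntegral_iff_norm]
    calc ∫⁻ ω, ENNReal.ofReal ‖S ω‖ ∂μ ≤ ∫⁻ ω, G ω ∂μ := by
          refine lintegral_mono fun ω => ?_
          rw [Real.norm_of_nonneg (hSnn ω)]
          exact ENNReal.ofReal_toReal_le
      _ < ⊤ := by rw [hGlint]; exact ENNReal.ofReal_lt_top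
  -- Partial sums of positive and negative parts of the drift.
  set P : ℕ → Ω → ℝ := fun n ω => ∑ t ∈ Finset.range n, p t ω with hPdef
  set Q : ℕ → Ω → ℝ := fun n ω => ∑ t ∈ Finset.range n, q t ω with hQdef
  have hPint : ∀ n, Integrable (P n) μ := fun n =>
    integrable_finset_sum _ fun t _ => hpint t
  have hQint : ∀ n, Integrable (Q n) μ := fun n =>
    integrable_finset_sum _ fun t _ => hqint t
  have hPmeas : ∀ n m, n ≤ m → StronglyMeasurable[ℱ m] (P n) := fun n m hnm =>
    (Finset.measurable_sum _ fun t ht =>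
      (((hpmeas t).mono (ℱ.mono ((Finset.mem_range.1 ht).le.trans hnm))).measurable)).stronglyMeasurable
  have hQmeas : ∀ n m, n ≤ m → StronglyMeasurable[ℱ m] (Q n) := fun n m hnm =>
    (Finset.measurable_sum _ fun t ht =>
      (((hqmeas t).mono (ℱ.mono ((Finset.mem_range.1 ht).le.trans hnm))).measurable)).stronglyMeasurable
  have hPmeasLe : ∀ n, StronglyMeasurable[ℱ n] (P (n + 1)) := fun n =>
    (Finset.measurable_sum _ fun t ht =>
      (((hpmeas t).mono (ℱ.mono (Nat.lt_succ_iff.1 (Finset.mem_range.1 ht)))).measurable)).stronglyMeasurable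
  have hQmeasLe : ∀ n, StronglyMeasurable[ℱ n] (Q (n + 1)) := fun n =>
    (Finset.measurable_sum _ fun t ht =>
      (((hqmeas t).mono (ℱ.mono (Nat.lt_succ_iff.1 (Finset.mem_range.1 ht)))).measurable)).stronglyMeasurable
  set W : ℕ → Ω → ℝ := fun n => μ[S|ℱ n] with hWdef
  have hWmart : Martingale W ℱ μ := martingale_condExp S ℱ μ
  set Z : ℕ → Ω → ℝ := fun n => u n + Q n - P n + W n with hZdef
  have hZint : ∀ n, Integrable (Z n) μ := fun n =>
    (((hint n).add (hQint n)).sub (hPint n)).add integrable_condExp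
  have hZadp : StronglyAdapted ℱ Z := fun n =>
    ((((hadapt n).stronglyMeasurable).add (hQmeas n n le_rfl)).sub (hPmeas n n le_rfl)).add
      stronglyMeasurable_condExp
  -- conditional expectation of `u (n+1)`
  have hgeq : ∀ n, ∀ᵐ ω ∂μ, (μ[u (n + 1)|ℱ n]) ω = u n ω + g n ω := by
    intro n
    have h1 : μ[u (n + 1) - u n|ℱ n] =ᵐ[μ] μ[u (n + 1)|ℱ n] - μ[u n|ℱ n] :=
      condExp_sub (hint (n + 1)) (hint n) _
    have h2 : μ[u n|ℱ n] = u n :=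
      condExp_of_stronglyMeasurable (ℱ.le n) (hadapt n).stronglyMeasurable (hint n)
    filter_upwards [h1] with ω hω
    rw [h2] at hω
    simp only [Pi.sub_apply] at hω
    have hgω : g n ω = u (n + 1) ω - u n ω + (u n ω + g n ω) - u (n + 1) ω := by ring
    have : g n ω = (μ[u (n + 1)|ℱ n]) ω - u n ω := hω
    linarith
  -- Z is a martingale
  have hZmart : Martingale Z ℱ μ := by
    refine martingale_nat hZadp hZint fun n => ?_
    have e1 : μ[u (n + 1) + Q (n + 1) - P (n + 1) + W (n + 1)|ℱ n]
        =ᵐ[μ] μ[u (n + 1) + Q (n + 1) - P (n + 1)|ℱ n] + μ[W (n + 1)|ℱ n] :=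
      condExp_add (((hint (n + 1)).add (hQint (n + 1))).sub (hPint (n + 1)))
        integrable_condExp _
    have e2 : μ[u (n + 1) + Q (n + 1) - P (n + 1)|ℱ n]
        =ᵐ[μ] μ[u (n + 1) + Q (n + 1)|ℱ n] - μ[P (n + 1)|ℱ n] :=
      condExp_sub ((hint (n + 1)).add (hQint (n + 1))) (hPint (n + 1)) _
    have e3 : μ[u (n + 1) + Q (n + 1)|ℱ n]
        =ᵐ[μ] μ[u (n + 1)|ℱ n] + μ[Q (n + 1)|ℱ n] :=
      condExp_add (hint (n + 1)) (hQint (n + 1)) _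
    have e4 : μ[Q (n + 1)|ℱ n] = Q (n + 1) :=
      condExp_of_stronglyMeasurable (ℱ.le n) (hQmeasLe n) (hQint (n + 1))
    have e5 : μ[P (n + 1)|ℱ n] = P (n + 1) :=
      condExp_of_stronglyMeasurable (ℱ.le n) (hPmeasLe n) (hPint (n + 1))
    have e6 : μ[W (n + 1)|ℱ n] =ᵐ[μ] W n := by
      simp only [hWdef]
      exact condExp_condExp_of_le (ℱ.mono n.le_succ) (ℱ.le (n + 1))
    have e7 := hgeq n
    show Z n =ᵐ[μ] μ[Z (n + 1)|ℱ n]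
    have hZn1 : Z (n + 1) = u (n + 1) + Q (n + 1) - P (n + 1) + W (n + 1) := rfl
    rw [hZn1]
    filter_upwards [e1, e2, e3, e6, e7] with ω h1 h2 h3 h6 h7
    rw [h1]
    simp only [Pi.add_apply]
    rw [h2]
    simp only [Pi.sub_apply]
    rw [h3]
    simp only [Pi.add_apply, e4, e5, h7, h6]
    have hQs : Q (n + 1) ω = Q n ω + q n ω := by
      simp only [hQdef, Finset.sum_range_succ]
    have hPs : P (n + 1) ω = P n ω + p n ω := by
      simp only [hPdef, Finset.sum_range_succ]
    have hZval : Z n ω = u n ω + Q n ω - P n ω + W n ω := rfl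
    rw [hZval, hQs, hPs]
    have := hpqg n ω
    ring_nf
    linarith
  -- a.e. facts: `P n ≤ S` and summability of `p · ω`
  have hae : ∀ᵐ ω ∂μ, Summable (fun t => p t ω) ∧ ∀ n, P n ω ≤ S ω := by
    filter_upwards [hGfin] with ω hω
    have hbd : ∀ n, P n ω ≤ S ω := by
      intro n
      have hPnn : 0 ≤ P n ω := Finset.sum_nonneg fun t _ => hpnn t ω
      have h1 : ENNReal.ofReal (P n ω) ≤ G ω := by
        simp only [hPdef]
        rw [ENNReal.ofReal_sum_of_nonneg fun t _ => hpnn t ω]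
        exact ENNReal.sum_le_tsum _
      have := ENNReal.toReal_mono hω.ne h1
      rwa [ENNReal.toReal_ofReal hPnn] at this
    exact ⟨summable_of_sum_range_le (fun t => hpnn t ω) (fun n => hbd n), hbd⟩
  -- nonnegativity facts
  have hWP : ∀ n, ∀ᵐ ω ∂μ, P n ω ≤ W n ω := by
    intro n
    have h1 : μ[S - P n|ℱ n] =ᵐ[μ] μ[S|ℱ n] - μ[P n|ℱ n] := condExp_sub hSint (hPint n) _
    have h2 : μ[P n|ℱ n] = P n :=
      condExp_of_stronglyMeasurable (ℱ.le n) (hPmeas n n le_rfl) (hPint n)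
    have h3 : 0 ≤ᵐ[μ] μ[S - P n|ℱ n] := by
      refine condExp_nonneg ?_
      filter_upwards [hae] with ω hω
      simp only [Pi.sub_apply, Pi.zero_apply]
      linarith [hω.2 n]
    filter_upwards [h1, h3] with ω hω1 hω3
    rw [h2] at hω1
    simp only [Pi.sub_apply, Pi.zero_apply] at hω1 hω3
    linarith
  have hWPall : ∀ᵐ ω ∂μ, ∀ n, P n ω ≤ W n ω := ae_all_iff.2 hWP
  have hZnn : ∀ n, 0 ≤ᵐ[μ] Z n := by
    intro n
    filter_upwards [hWP n] with ω hω
    have hQω : 0 ≤ Q n ω := Finset.sum_nonneg fun t _ => hqnn t ω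
    have hZval : Z n ω = u n ω + Q n ω - P n ω + W n ω := rfl
    simp only [Pi.zero_apply]
    rw [hZval]
    linarith [hnonneg n ω]
  -- constant expectation
  have hZ0 : ∀ n, ∫ ω, Z n ω ∂μ = ∫ ω, Z 0 ω ∂μ := by
    intro n
    calc ∫ ω, Z n ω ∂μ = ∫ ω, (μ[Z n|ℱ 0]) ω ∂μ := (integral_condExp (ℱ.le 0)).symm
      _ = ∫ ω, Z 0 ω ∂μ := integral_congr_ae (hZmart.condExp_ae_eq (Nat.zero_le n))
  -- L¹ bound helper
  have hnorm : ∀ (f : Ω → ℝ), Integrable f μ → 0 ≤ᵐ[μ] f →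
      eLpNorm f 1 μ = ENNReal.ofReal (∫ ω, f ω ∂μ) := by
    intro f hf hf0
    rw [eLpNorm_one_eq_lintegral_enorm, ofReal_integral_eq_lintegral_ofReal hf hf0]
    refine lintegral_congr_ae ?_
    filter_upwards [hf0] with ω h
    exact Real.enorm_eq_ofReal h
  -- a.e. convergence of Z
  have hZbdd : ∀ n, eLpNorm (Z n) 1 μ ≤ (∫ ω, Z 0 ω ∂μ).toNNReal := by
    intro n
    rw [hnorm (Z n) (hZint n) (hZnn n), hZ0 n]
    exact le_of_eq rfl
  have hZconv : ∀ᵐ ω ∂μ, ∃ c, Tendsto (fun n => Z n ω) atTop (nhds c) :=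
    hZmart.submartingale.exists_ae_tendsto_of_bdd hZbdd
  -- a.e. convergence of W
  have hStop : eLpNorm S 1 μ ≠ ⊤ := (memLp_one_iff_integrable.2 hSint).2.ne
  have hWbdd : ∀ n, eLpNorm (W n) 1 μ ≤ (eLpNorm S 1 μ).toNNReal := by
    intro n
    rw [ENNReal.coe_toNNReal hStop]
    exact eLpNorm_one_condExp_le_eLpNorm _
  have hWconv : ∀ᵐ ω ∂μ, ∃ c, Tendsto (fun n => W n ω) atTop (nhds c) :=
    hWmart.submartingale.exists_ae_tendsto_of_bdd hWbdd
  -- assemble everything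
  filter_upwards [hZconv, hWconv, hae, hWPall] with ω hZc hWc haeω hWPω
  obtain ⟨c, hc⟩ := hZc
  obtain ⟨c', hc'⟩ := hWc
  obtain ⟨hsump, hPS⟩ := haeω
  -- bound on Q
  have hZval : ∀ n, Z n ω = u n ω + Q n ω - P n ω + W n ω := fun n => rfl
  have hQleZ : ∀ n, Q n ω ≤ Z n ω := by
    intro n
    rw [hZval n]
    linarith [hnonneg n ω, hWPω n]
  obtain ⟨b, hb⟩ := hc.bddAbove_range
  have hQle : ∀ n, Q n ω ≤ b := fun n => (hQleZ n).trans (hb ⟨n, rfl⟩)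
  have hsumq : Summable fun t => q t ω :=
    summable_of_sum_range_le (fun t => hqnn t ω) (fun n => hQle n)
  have hQtend : Tendsto (fun n => Q n ω) atTop (nhds (∑' t, q t ω)) :=
    hsumq.hasSum.tendsto_sum_nat
  have hPtend : Tendsto (fun n => P n ω) atTop (nhds (∑' t, p t ω)) :=
    hsump.hasSum.tendsto_sum_nat
  constructor
  · refine ⟨c - (∑' t, q t ω) + (∑' t, p t ω) - c', ?_⟩
    have h := ((hc.sub hQtend).add hPtend).sub hc'
    refine h.congr fun n => ?_
    rw [hZval n]
    ring
  · have : Summable fun t => |g t ω| :=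
      ((hsump.add hsumq).congr fun t => (habs t ω).symm)
    simpa only [hgdef] using this
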